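/- Let K be a field and n ≥ 3 an integer, and for k ≥ 1 let R_k = K[V(T_{n,k})]. Then sdepth(R_2/I(T_{n,2})) ≤ n, and for every integer k ≥ 3, sdepth(R_k/I(T_{n,k})) ≤ n(n−1)^{k−2} + sdepth(R_{k−3}/I(T_{n,k−3})) (where T_{n,0} is a single vertex and I(T_{n,0}) := (0), so sdepth(R_0/I(T_{n,0})) = 1). -/

import Mathlib

open MvPolynomial

/-- Level sizes of the perfect semiregular tree `T_{n,k}`. -/
def semiLevel (n : ℕ) : ℕ → ℕ
  | 0 => 1
  | a + 1 => n * (n - 1) ^ a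

/-- Vertices of the perfect semiregular tree `T_{n,k}`. -/
abbrev SemiVert (n k : ℕ) : Type := Σ a : Fin (k + 1), Fin (semiLevel n (a : ℕ))

/-- The perfect semiregular tree `T_{n,k}`: every internal (non-pendant) vertex has degree
`n` and every pendant vertex is at distance `k` from the root.  The vertex `j` at level
`a+1` is a child of vertex `j/(n-1)` at level `a` (of the root when `a = 0`). -/
def semiTree (n k : ℕ) : SimpleGraph (SemiVert n k) :=
  SimpleGraph.fromRel (fun v w =>
    (v.1 : ℕ) + 1 = (w.1 : ℕ) ∧ ((v.1 : ℕ) = 0 ∨ (v.2 : ℕ) = (w.2 : ℕ) / (n - 1)))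

/-- The edge ideal `I(G)` of a graph `G`, inside the polynomial ring over `K`
with variables the vertices of `G`. -/
noncomputable def edgeIdeal (K : Type) [Field K] {V : Type} (G : SimpleGraph V) :
    Ideal (MvPolynomial V K) :=
  Ideal.span {p | ∃ v w, G.Adj v w ∧ p = X v * X w}

/-- The Stanley space `u·K[Z]` inside `S/I`, spanned over `K` by the images of the
monomials `x^u · x^f` with `support f ⊆ Z`. -/
noncomputable def stanleySpace (K : Type) [Field K] {V : Type}
    (I : Ideal (MvPolynomial V K)) (u : V →₀ ℕ) (Z : Set V) :
    Submodule K (MvPolynomial V K ⧸ I) :=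
  Submodule.span K {m | ∃ f : V →₀ ℕ, (f.support : Set V) ⊆ Z ∧
    m = Ideal.Quotient.mk I (monomial (u + f) (1 : K))}

/-- A Stanley decomposition of `S/I`: a finite family of Stanley spaces `u_j·K[Z_j]`,
each of them free (that is, the monomial multiples of `u_j` are `K`-linearly independent),
whose internal direct sum as `K`-vector spaces is all of `S/I`. -/
def IsStanleyDecomp (K : Type) [Field K] {V : Type} (I : Ideal (MvPolynomial V K))
    (r : ℕ) (u : Fin r → (V →₀ ℕ)) (Z : Fin r → Finset V) : Prop :=
  DirectSum.IsInternal (fun j : Fin r => stanleySpace K I (u j) (Z j : Set V)) ∧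
  ∀ j : Fin r, LinearIndependent K
    (fun f : {f : V →₀ ℕ // (f.support : Set V) ⊆ (Z j : Set V)} =>
      Ideal.Quotient.mk I (monomial (u j + f.1) (1 : K)))

/-- The Stanley depth of `S/I`: the largest `d` such that there is a Stanley decomposition
all of whose Stanley spaces `u_j·K[Z_j]` satisfy `|Z_j| ≥ d`. -/
noncomputable def quotSdepth (K : Type) [Field K] (V : Type)
    (I : Ideal (MvPolynomial V K)) : ℕ :=
  sSup {d | ∃ (r : ℕ) (u : Fin r → (V →₀ ℕ)) (Z : Fin r → Finset V),
    IsStanleyDecomp K I r u Z ∧ ∀ j, d ≤ (Z j).card}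

/-! ### Generic theory -/

section Gen

variable (K : Type) [Field K] {V : Type} (G : SimpleGraph V)

/-- An exponent vector is *bad* if it is divisible by an edge. -/
def ExpBad (G : SimpleGraph V) (e : V →₀ ℕ) : Prop :=
  ∃ v w, G.Adj v w ∧ 1 ≤ e v ∧ 1 ≤ e w

theorem edgeIdeal_eq :
    edgeIdeal K G = Ideal.span ((fun s => monomial s (1 : K)) ''
      {s | ∃ v w, G.Adj v w ∧ s = Finsupp.single v 1 + Finsupp.single w 1}) := by
  unfold edgeIdeal
  congr 1
  ext p
  constructor
  · rintro ⟨v, w, h, rfl⟩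
    exact ⟨_, ⟨v, w, h, rfl⟩, by simp [X, monomial_mul]⟩
  · rintro ⟨s, ⟨v, w, h, rfl⟩, rfl⟩
    exact ⟨v, w, h, by simp [X, monomial_mul]⟩

theorem edge_le_iff {v w : V} (h : G.Adj v w) (e : V →₀ ℕ) :
    Finsupp.single v 1 + Finsupp.single w 1 ≤ e ↔ 1 ≤ e v ∧ 1 ≤ e w := by
  classical
  have hvw : v ≠ w := h.ne
  rw [Finsupp.le_def]
  constructor
  · intro hle
    refine ⟨le_trans ?_ (hle v), le_trans ?_ (hle w)⟩ <;>
      simp [Finsupp.single_apply, hvw, hvw.symm]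
  · rintro ⟨h1, h2⟩ x
    rcases eq_or_ne x v with rfl | hxv
    · simpa [Finsupp.single_apply, hvw.symm] using h1
    rcases eq_or_ne x w with rfl | hxw
    · simpa [Finsupp.single_apply, hvw] using h2
    · simp [Finsupp.single_apply, Ne.symm hxv, Ne.symm hxw]

theorem mem_edgeIdeal_iff (p : MvPolynomial V K) :
    p ∈ edgeIdeal K G ↔ ∀ m ∈ p.support, ExpBad G m := by
  rw [edgeIdeal_eq, mem_ideal_span_monomial_image]
  refine forall₂_congr fun m _ => ?_
  constructor
  · rintro ⟨s, ⟨v, w, h, rfl⟩, hle⟩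
    exact ⟨v, w, h, ((edge_le_iff G h m).1 hle)⟩
  · rintro ⟨v, w, h, h1, h2⟩
    exact ⟨_, ⟨v, w, h, rfl⟩, (edge_le_iff G h m).2 ⟨h1, h2⟩⟩

theorem monomial_mem_edgeIdeal_iff (e : V →₀ ℕ) :
    monomial e (1 : K) ∈ edgeIdeal K G ↔ ExpBad G e := by
  rw [mem_edgeIdeal_iff]
  classical
  rw [support_monomial, if_neg (one_ne_zero : (1 : K) ≠ 0)]
  simp

theorem mk_monomial_eq_zero_iff (e : V →₀ ℕ) :
    Ideal.Quotient.mk (edgeIdeal K G) (monomial e (1 : K)) = 0 ↔ ExpBad G e := by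
  rw [Ideal.Quotient.eq_zero_iff_mem, monomial_mem_edgeIdeal_iff]

/-- The classes of good monomials form a basis of `S/I(G)`. -/
noncomputable def goodBasis :
    Module.Basis {e : V →₀ ℕ // ¬ ExpBad G e} K (MvPolynomial V K ⧸ edgeIdeal K G) := by
  apply Module.Basis.mk (v := fun e => Ideal.Quotient.mk (edgeIdeal K G) (monomial e.1 (1 : K)))
  · rw [linearIndependent_iff]
    intro l hl
    set L := (Ideal.Quotient.mkₐ K (edgeIdeal K G)).toLinearMap with hL
    have hml : ∀ q, L q = Ideal.Quotient.mk (edgeIdeal K G) q := fun q => rfl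
    have h2 : L (Finsupp.linearCombination K
        (fun e : {e : V →₀ ℕ // ¬ ExpBad G e} => monomial e.1 (1 : K)) l) = 0 := by
      rw [Finsupp.apply_linearCombination]
      exact hl
    set P := Finsupp.linearCombination K
        (fun e : {e : V →₀ ℕ // ¬ ExpBad G e} => monomial e.1 (1 : K)) l with hP
    have hPI : P ∈ edgeIdeal K G := by
      rw [← Ideal.Quotient.eq_zero_iff_mem]; exact h2
    ext e₀
    by_contra h0'
    have h0 : l e₀ ≠ 0 := by simpa using h0'
    have he₀ : e₀ ∈ l.support := Finsupp.mem_support_iff.2 h0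
    have hcoeff : coeff e₀.1 P = l e₀ := by
      rw [hP, Finsupp.linearCombination_apply, Finsupp.sum, coeff_sum]
      rw [Finset.sum_eq_single e₀]
      · classical rw [coeff_smul, coeff_monomial, if_pos rfl, smul_eq_mul, mul_one]
      · intro b _ hb
        have hbb : b.1 ≠ e₀.1 := fun hh => hb (Subtype.ext hh)
        classical rw [coeff_smul, coeff_monomial, if_neg hbb, smul_eq_mul, mul_zero]
      · intro hmem; exact absurd he₀ hmem
    have : ExpBad G e₀.1 := by
      have := (mem_edgeIdeal_iff K G P).1 hPI e₀.1 ?_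
      · exact this
      · rw [mem_support_iff, hcoeff]; exact h0
    exact e₀.2 this
  · rw [top_le_iff, eq_top_iff]
    rintro x -
    obtain ⟨p, rfl⟩ := Ideal.Quotient.mk_surjective x
    have hx : Ideal.Quotient.mk (edgeIdeal K G) p =
        (Ideal.Quotient.mkₐ K (edgeIdeal K G)).toLinearMap p := rfl
    rw [hx, show p = ∑ m ∈ p.support, monomial m (coeff m p) from p.as_sum, map_sum]
    apply Submodule.sum_mem
    intro m _
    have : monomial m (coeff m p) = (coeff m p) • monomial m (1 : K) := by
      rw [smul_monomial, smul_eq_mul, mul_one]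
    rw [this, map_smul]
    apply Submodule.smul_mem
    by_cases hm : ExpBad G m
    · show (Ideal.Quotient.mk (edgeIdeal K G)) (monomial m (1:K)) ∈ _
      rw [(mk_monomial_eq_zero_iff K G m).2 hm]; exact Submodule.zero_mem _
    · exact Submodule.subset_span ⟨⟨m, hm⟩, rfl⟩

theorem goodBasis_apply (e : V →₀ ℕ) (h : ¬ ExpBad G e) :
    goodBasis K G ⟨e, h⟩ = Ideal.Quotient.mk (edgeIdeal K G) (monomial e (1 : K)) := by
  rw [goodBasis, Module.Basis.mk_apply]

end Gen

section Decomp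

variable (K : Type) [Field K] {V : Type} (G : SimpleGraph V)

theorem decomp_validity {r : ℕ} {u : Fin r → (V →₀ ℕ)} {Z : Fin r → Finset V}
    (h : IsStanleyDecomp K (edgeIdeal K G) r u Z) (j : Fin r) (f : V →₀ ℕ)
    (hf : (f.support : Set V) ⊆ (Z j : Set V)) : ¬ ExpBad G (u j + f) := by
  have := (h.2 j).ne_zero ⟨f, hf⟩
  rw [Ne, mk_monomial_eq_zero_iff K G] at this
  exact this

theorem decomp_cover {r : ℕ} {u : Fin r → (V →₀ ℕ)} {Z : Fin r → Finset V}
    (h : IsStanleyDecomp K (edgeIdeal K G) r u Z) (e : V →₀ ℕ) (he : ¬ ExpBad G e) :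
    ∃ j f, (f.support : Set V) ⊆ (Z j : Set V) ∧ e = u j + f := by
  classical
  set B := goodBasis K G
  set T : Set {e : V →₀ ℕ // ¬ ExpBad G e} :=
    {t | ∃ j f, (f.support : Set V) ⊆ (Z j : Set V) ∧ t.1 = u j + f} with hT
  have hsub : ∀ j : Fin r, stanleySpace K (edgeIdeal K G) (u j) (Z j : Set V) ≤
      Submodule.span K (B '' T) := by
    intro j
    apply Submodule.span_le.2
    rintro m ⟨f, hf, rfl⟩
    have hg : ¬ ExpBad G (u j + f) := decomp_validity K G h j f hf
    have : Ideal.Quotient.mk (edgeIdeal K G) (monomial (u j + f) (1 : K)) = B ⟨u j + f, hg⟩ :=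
      (goodBasis_apply K G _ _).symm
    rw [this]
    exact Submodule.subset_span ⟨⟨u j + f, hg⟩, ⟨j, f, hf, rfl⟩, rfl⟩
  have htop : (⊤ : Submodule K (MvPolynomial V K ⧸ edgeIdeal K G)) ≤
      Submodule.span K (B '' T) := by
    rw [← h.1.submodule_iSup_eq_top]
    exact iSup_le hsub
  have hx : B ⟨e, he⟩ ∈ Submodule.span K (B '' T) := htop trivial
  have := (Module.Basis.mem_span_image B).1 hx
  have hmem : (⟨e, he⟩ : {e : V →₀ ℕ // ¬ ExpBad G e}) ∈ T := by
    apply this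
    rw [B.repr_self]
    simp [Finsupp.support_single_ne_zero]
  exact hmem

theorem decomp_disjoint {r : ℕ} {u : Fin r → (V →₀ ℕ)} {Z : Fin r → Finset V}
    (h : IsStanleyDecomp K (edgeIdeal K G) r u Z) (i j : Fin r) (f g : V →₀ ℕ)
    (hf : (f.support : Set V) ⊆ (Z i : Set V)) (hg : (g.support : Set V) ⊆ (Z j : Set V))
    (heq : u i + f = u j + g) : i = j := by
  by_contra hij
  have hgood : ¬ ExpBad G (u i + f) := decomp_validity K G h i f hf
  set x := goodBasis K G ⟨u i + f, hgood⟩ with hxdef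
  have hx1 : x ∈ stanleySpace K (edgeIdeal K G) (u i) (Z i : Set V) := by
    rw [hxdef, goodBasis_apply]
    exact Submodule.subset_span ⟨f, hf, rfl⟩
  have hx2 : x ∈ stanleySpace K (edgeIdeal K G) (u j) (Z j : Set V) := by
    rw [hxdef, goodBasis_apply]
    exact Submodule.subset_span ⟨g, hg, by rw [heq]⟩
  have hind := ((DirectSum.isInternal_submodule_iff_iSupIndep_and_iSup_eq_top _).1 h.1).1
  have hdisj := iSupIndep_def.1 hind i
  have hx2' : x ∈ ⨆ (l) (_ : l ≠ i), stanleySpace K (edgeIdeal K G) (u l) (Z l : Set V) := by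
    refine Submodule.mem_iSup_of_mem j ?_
    rw [iSup_pos (Ne.symm hij)]
    exact hx2
  have : x = 0 := Submodule.disjoint_def.1 hdisj x hx1 hx2'
  exact (goodBasis K G).ne_zero _ this

theorem construct_decomp (r : ℕ) (u : Fin r → (V →₀ ℕ)) (Z : Fin r → Finset V)
    (validity : ∀ j f, (f.support : Set V) ⊆ (Z j : Set V) → ¬ ExpBad G (u j + f))
    (cover : ∀ e, ¬ ExpBad G e → ∃ j f, (f.support : Set V) ⊆ (Z j : Set V) ∧ e = u j + f)
    (disj : ∀ i j f g, (f.support : Set V) ⊆ (Z i : Set V) → (g.support : Set V) ⊆ (Z j : Set V)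
      → u i + f = u j + g → i = j) :
    IsStanleyDecomp K (edgeIdeal K G) r u Z := by
  classical
  set B := goodBasis K G
  set T : Fin r → Set {e : V →₀ ℕ // ¬ ExpBad G e} :=
    fun j => {t | ∃ f, (f.support : Set V) ⊆ (Z j : Set V) ∧ t.1 = u j + f} with hT
  have hspan : ∀ j, stanleySpace K (edgeIdeal K G) (u j) (Z j : Set V) =
      Submodule.span K (B '' T j) := by
    intro j
    unfold stanleySpace
    congr 1
    ext m
    constructor
    · rintro ⟨f, hf, rfl⟩
      exact ⟨⟨u j + f, validity j f hf⟩, ⟨f, hf, rfl⟩, (goodBasis_apply K G _ _)⟩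
    · rintro ⟨⟨e, he⟩, ⟨f, hf, hef⟩, rfl⟩
      subst hef
      exact ⟨f, hf, goodBasis_apply K G _ _⟩
  constructor
  · rw [DirectSum.isInternal_submodule_iff_iSupIndep_and_iSup_eq_top]
    constructor
    · rw [iSupIndep_def]
      intro i
      rw [Submodule.disjoint_def]
      intro x hx1 hx2
      have hle : (⨆ (l) (_ : l ≠ i), stanleySpace K (edgeIdeal K G) (u l) (Z l : Set V)) ≤
          Submodule.span K (B '' (⋃ (l) (_ : l ≠ i), T l)) := by
        refine iSup₂_le fun l hl => ?_
        rw [hspan l]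
        exact Submodule.span_mono (Set.image_mono
          (Set.subset_iUnion₂ (s := fun l (_ : l ≠ i) => T l) l hl))
      rw [hspan i] at hx1
      have hx2' := hle hx2
      have h1 := (Module.Basis.mem_span_image B).1 hx1
      have h2 := (Module.Basis.mem_span_image B).1 hx2'
      have hempty : (T i ∩ ⋃ (l) (_ : l ≠ i), T l) = ∅ := by
        ext t
        simp only [Set.mem_inter_iff, Set.mem_iUnion, Set.mem_empty_iff_false, iff_false,
          not_and, not_exists]
        rintro ⟨f, hf, hef⟩ l hl ⟨g, hg, heg⟩
        exact hl (disj l i g f hg hf (heg ▸ hef ▸ rfl))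
      have : ((B.repr x).support : Set {e : V →₀ ℕ // ¬ ExpBad G e}) ⊆ ∅ := by
        rw [← hempty]
        exact Set.subset_inter h1 h2
      have hrepr : B.repr x = 0 := by
        ext t
        by_contra ht
        exact absurd (this (Finsupp.mem_support_iff.2 ht)) (Set.notMem_empty t)
      have := B.repr.map_eq_zero_iff.1 hrepr
      exact this
    · rw [eq_top_iff, ← B.span_eq]
      apply Submodule.span_le.2
      rintro m ⟨⟨e, he⟩, rfl⟩
      obtain ⟨j, f, hf, hef⟩ := cover e he
      have : B ⟨e, he⟩ ∈ stanleySpace K (edgeIdeal K G) (u j) (Z j : Set V) := by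
        rw [goodBasis_apply]
        exact Submodule.subset_span ⟨f, hf, by rw [hef]⟩
      exact Submodule.mem_iSup_of_mem j this
  · intro j
    have hfun : (fun f : {f : V →₀ ℕ // (f.support : Set V) ⊆ (Z j : Set V)} =>
        Ideal.Quotient.mk (edgeIdeal K G) (monomial (u j + f.1) (1 : K))) =
        B ∘ (fun f : {f : V →₀ ℕ // (f.support : Set V) ⊆ (Z j : Set V)} =>
          (⟨u j + f.1, validity j f.1 f.2⟩ : {e : V →₀ ℕ // ¬ ExpBad G e})) := by
      funext f
      exact (goodBasis_apply K G _ _).symm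
    rw [hfun]
    apply B.linearIndependent.comp
    intro f g hfg
    have : u j + f.1 = u j + g.1 := congrArg Subtype.val hfg
    exact Subtype.ext (by exact add_left_cancel this)

end Decomp

section SdepthSet

variable (K : Type) [Field K] {V : Type} (G : SimpleGraph V)

/-- The defining set of `quotSdepth`. -/
def sdepthSet : Set ℕ :=
  {d | ∃ (r : ℕ) (u : Fin r → (V →₀ ℕ)) (Z : Fin r → Finset V),
    IsStanleyDecomp K (edgeIdeal K G) r u Z ∧ ∀ j, d ≤ (Z j).card}

theorem quotSdepth_eq : quotSdepth K V (edgeIdeal K G) = sSup (sdepthSet K G) := rfl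

theorem decomp_r_pos {r : ℕ} {u : Fin r → (V →₀ ℕ)} {Z : Fin r → Finset V}
    (h : IsStanleyDecomp K (edgeIdeal K G) r u Z) : 0 < r := by
  rcases Nat.eq_zero_or_pos r with hr | hr
  · exfalso
    subst hr
    have htop := h.1.submodule_iSup_eq_top
    have hbot : (⨆ j : Fin 0, stanleySpace K (edgeIdeal K G) (u j) (Z j : Set V)) = ⊥ :=
      iSup_of_empty _
    rw [hbot] at htop
    have h0 : ¬ ExpBad G (0 : V →₀ ℕ) := by rintro ⟨v, w, _, h1, _⟩; simp at h1
    have := (goodBasis K G).ne_zero ⟨0, h0⟩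
    apply this
    have : goodBasis K G ⟨0, h0⟩ ∈ (⊥ : Submodule K (MvPolynomial V K ⧸ edgeIdeal K G)) := by
      rw [htop]; trivial
    exact this
  · exact hr

theorem sdepthSet_le [Fintype V] {d : ℕ} (hd : d ∈ sdepthSet K G) : d ≤ Fintype.card V := by
  obtain ⟨r, u, Z, h, hle⟩ := hd
  have hr := decomp_r_pos K G h
  exact le_trans (hle ⟨0, hr⟩) (Finset.card_le_univ _)

theorem sdepthSet_bddAbove [Fintype V] : BddAbove (sdepthSet K G) :=
  ⟨Fintype.card V, fun _ hd => sdepthSet_le K G hd⟩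

theorem quotSdepth_le_of_forall (m : ℕ) (h : ∀ d ∈ sdepthSet K G, d ≤ m) :
    quotSdepth K V (edgeIdeal K G) ≤ m :=
  csSup_le' h

end SdepthSet

section Tree

theorem SemiVert.ext' {n k : ℕ} {v w : SemiVert n k} (h1 : (v.1 : ℕ) = (w.1 : ℕ))
    (h2 : (v.2 : ℕ) = (w.2 : ℕ)) : v = w := by
  obtain ⟨⟨a, ha⟩, ⟨i, hi⟩⟩ := v
  obtain ⟨⟨b, hb⟩, ⟨j, hj⟩⟩ := w
  simp only [Fin.val_mk] at h1 h2
  subst h1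
  subst h2
  rfl

theorem semiTree_adj {n k : ℕ} {v w : SemiVert n k} :
    (semiTree n k).Adj v w ↔ v ≠ w ∧
      (((v.1 : ℕ) + 1 = (w.1 : ℕ) ∧ ((v.1 : ℕ) = 0 ∨ (v.2 : ℕ) = (w.2 : ℕ) / (n - 1))) ∨
       ((w.1 : ℕ) + 1 = (v.1 : ℕ) ∧ ((w.1 : ℕ) = 0 ∨ (w.2 : ℕ) = (v.2 : ℕ) / (n - 1)))) := by
  rw [semiTree, SimpleGraph.fromRel_adj]

theorem adj_levels {n k : ℕ} {v w : SemiVert n k} (h : (semiTree n k).Adj v w) :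
    (v.1 : ℕ) + 1 = (w.1 : ℕ) ∨ (w.1 : ℕ) + 1 = (v.1 : ℕ) := by
  rcases (semiTree_adj.1 h).2 with ⟨h1, _⟩ | ⟨h1, _⟩
  · exact Or.inl h1
  · exact Or.inr h1

/-- The number of vertices at level `a`. -/
theorem card_level (n k a : ℕ) (ha : a < k + 1) :
    ((Finset.univ.filter fun y : SemiVert n k => (y.1 : ℕ) = a)).card = semiLevel n a := by
  classical
  rw [← Fintype.card_fin (semiLevel n a)]
  rw [← Finset.card_univ]
  symm
  apply Finset.card_bij (fun (i : Fin (semiLevel n a)) _ =>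
    (⟨⟨a, ha⟩, ⟨i.1, i.2⟩⟩ : SemiVert n k))
  · intro i _
    simp
  · intro i _ j _ hij
    have := congrArg (fun y : SemiVert n k => (y.2 : ℕ)) hij
    exact Fin.ext this
  · intro y hy
    have hy1 : (y.1 : ℕ) = a := by simpa using hy
    refine ⟨⟨(y.2 : ℕ), by rw [← hy1]; exact y.2.2⟩, Finset.mem_univ _, ?_⟩
    exact (SemiVert.ext' (by simpa using hy1.symm) rfl)

/-- Indicator exponent vector of a level. -/
noncomputable def lvlInd (n k a : ℕ) : SemiVert n k →₀ ℕ :=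
  Finsupp.equivFunOnFinite.symm fun y => if (y.1 : ℕ) = a then 1 else 0

theorem lvlInd_apply (n k a : ℕ) (y : SemiVert n k) :
    lvlInd n k a y = if (y.1 : ℕ) = a then 1 else 0 := rfl

end Tree

section Clause3

theorem clause3 (K : Type) [Field K] (n : ℕ) :
    quotSdepth K (SemiVert n 0) (edgeIdeal K (semiTree n 0)) = 1 := by
  classical
  have hcard : Fintype.card (SemiVert n 0) = 1 := by
    simp [Fintype.card_sigma, semiLevel]
  have hnoadj : ∀ v w : SemiVert n 0, ¬ (semiTree n 0).Adj v w := by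
    intro v w hadj
    have h1 : (v.1 : ℕ) = 0 := by omega
    have h2 : (w.1 : ℕ) = 0 := by omega
    rcases adj_levels hadj with h | h <;> omega
  have hnobad : ∀ e : SemiVert n 0 →₀ ℕ, ¬ ExpBad (semiTree n 0) e := by
    rintro e ⟨v, w, hadj, _, _⟩
    exact hnoadj v w hadj
  have hdec : IsStanleyDecomp K (edgeIdeal K (semiTree n 0)) 1
      (fun _ => 0) (fun _ => Finset.univ) := by
    apply construct_decomp
    · intro j f _
      exact hnobad _
    · intro e _
      exact ⟨0, e, by simp, (zero_add e).symm⟩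
    · intro i j _ _ _ _ _
      exact Subsingleton.elim i j
  have hmem : 1 ∈ sdepthSet K (semiTree n 0) := by
    refine ⟨1, _, _, hdec, fun j => ?_⟩
    rw [Finset.card_univ, hcard]
  apply le_antisymm
  · apply quotSdepth_le_of_forall
    intro d hd
    have := sdepthSet_le K (semiTree n 0) hd
    omega
  · exact le_csSup (sdepthSet_bddAbove K _) hmem

end Clause3

section Clause1

theorem clause1 (K : Type) [Field K] (n : ℕ) (hn : 3 ≤ n) :
    quotSdepth K (SemiVert n 2) (edgeIdeal K (semiTree n 2)) ≤ n := by
  classical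
  apply quotSdepth_le_of_forall
  rintro d ⟨r, u, Z, h, hle⟩
  set G := semiTree n 2
  set e := lvlInd n 2 1 with hedef
  have helvl : ∀ y : SemiVert n 2, e y = if (y.1 : ℕ) = 1 then 1 else 0 := fun y => rfl
  have he : ¬ ExpBad G e := by
    rintro ⟨v, w, hadj, h1, h2⟩
    rw [helvl] at h1 h2
    have hv : (v.1 : ℕ) = 1 := by by_contra hc; rw [if_neg hc] at h1; omega
    have hw : (w.1 : ℕ) = 1 := by by_contra hc; rw [if_neg hc] at h2; omega
    rcases adj_levels hadj with hh | hh <;> omega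
  obtain ⟨j, f, hf, hef⟩ := decomp_cover K G h e he
  have claim : ∀ z ∈ Z j, (z.1 : ℕ) = 1 := by
    intro z hz
    have hsupp : (((f + Finsupp.single z 1).support : Finset _) : Set (SemiVert n 2)) ⊆
        (Z j : Set (SemiVert n 2)) := by
      intro x hx
      have hx' := Finsupp.support_add (g₁ := f) (g₂ := Finsupp.single z 1) hx
      rcases Finset.mem_union.1 hx' with hx1 | hx2
      · exact hf hx1
      · have : x = z := by
          have := Finsupp.support_single_subset hx2
          simpa using this
        subst this; exact hz
    have hval := decomp_validity K G h j (f + Finsupp.single z 1) hsupp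
    have hE : u j + (f + Finsupp.single z 1) = e + Finsupp.single z 1 := by
      rw [← add_assoc, ← hef]
    rw [hE] at hval
    have hEz : 1 ≤ ((e + Finsupp.single z 1 : SemiVert n 2 →₀ ℕ)) z := by
      rw [Finsupp.add_apply, Finsupp.single_apply, if_pos rfl]
      omega
    have hlvl : (z.1 : ℕ) < 3 := z.1.2
    by_contra hne
    have hcase : (z.1 : ℕ) = 0 ∨ (z.1 : ℕ) = 2 := by omega
    rcases hcase with h0 | h2
    · -- z is the root; adjacent to the level-1 vertex b
      have hpos : 0 < semiLevel n 1 := by simp [semiLevel]; omega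
      set b : SemiVert n 2 := ⟨⟨1, by omega⟩, ⟨0, hpos⟩⟩ with hbdef
      have hzb : z ≠ b := by
        intro hc
        have := congrArg (fun y : SemiVert n 2 => (y.1 : ℕ)) hc
        simp [hbdef] at this; omega
      have hadj : G.Adj z b := by
        rw [semiTree_adj]
        exact ⟨hzb, Or.inl ⟨by simp [hbdef, h0], Or.inl h0⟩⟩
      apply hval
      refine ⟨z, b, hadj, hEz, ?_⟩
      have : e b = 1 := by rw [helvl]; simp [hbdef]
      calc (1 : ℕ) = e b := this.symm
        _ ≤ ((e + Finsupp.single z 1 : SemiVert n 2 →₀ ℕ)) b := by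
          rw [Finsupp.add_apply]; omega
    · -- z is a leaf; adjacent to its parent p at level 1
      have hzlt : (z.2 : ℕ) < n * (n - 1) := by
        have := z.2.2
        simpa [semiLevel, h2, pow_one] using this
      have hp : (z.2 : ℕ) / (n - 1) < semiLevel n 1 := by
        have hn1 : 0 < n - 1 := by omega
        have : (z.2 : ℕ) / (n - 1) < n := by
          rw [Nat.div_lt_iff_lt_mul hn1]
          omega
        simpa [semiLevel] using this
      set p : SemiVert n 2 := ⟨⟨1, by omega⟩, ⟨(z.2 : ℕ) / (n - 1), hp⟩⟩ with hpdef
      have hzp : p ≠ z := by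
        intro hc
        have := congrArg (fun y : SemiVert n 2 => (y.1 : ℕ)) hc
        simp [hpdef] at this; omega
      have hadj : G.Adj p z := by
        rw [semiTree_adj]
        exact ⟨hzp, Or.inl ⟨by simp [hpdef, h2], Or.inr (by rw [hpdef])⟩⟩
      apply hval
      refine ⟨p, z, hadj, ?_, hEz⟩
      have : e p = 1 := by rw [helvl]; simp [hpdef]
      calc (1 : ℕ) = e p := this.symm
        _ ≤ ((e + Finsupp.single z 1 : SemiVert n 2 →₀ ℕ)) p := by
          rw [Finsupp.add_apply]; omega
  have hsub : Z j ⊆ Finset.univ.filter fun y : SemiVert n 2 => (y.1 : ℕ) = 1 := by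
    intro z hz
    exact Finset.mem_filter.2 ⟨Finset.mem_univ _, claim z hz⟩
  have hcard : (Z j).card ≤ n := by
    have := Finset.card_le_card hsub
    rw [card_level n 2 1 (by omega)] at this
    simpa [semiLevel] using this
  exact le_trans (hle j) hcard

end Clause1

section Transfer

/-- Inclusion of the truncated tree's vertices into the big tree. -/
def iotaV {n k : ℕ} (x : SemiVert n (k - 3)) : SemiVert n k :=
  ⟨⟨x.1.1, by omega⟩, ⟨x.2.1, x.2.2⟩⟩

theorem iotaV_level {n k : ℕ} (x : SemiVert n (k - 3)) : ((iotaV x).1 : ℕ) = (x.1 : ℕ) := rfl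

theorem iotaV_level_le {n k : ℕ} (x : SemiVert n (k - 3)) : ((iotaV x).1 : ℕ) ≤ k - 3 := by
  have := x.1.2
  have : (x.1 : ℕ) < k - 3 + 1 := this
  rw [iotaV_level]
  omega

/-- Partial inverse of `iotaV`. -/
def pullV {n k : ℕ} (y : SemiVert n k) (_ : (y.1 : ℕ) ≤ k - 3) : SemiVert n (k - 3) :=
  ⟨⟨y.1.1, by omega⟩, ⟨y.2.1, y.2.2⟩⟩

theorem iotaV_pullV {n k : ℕ} (y : SemiVert n k) (h : (y.1 : ℕ) ≤ k - 3) :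
    iotaV (pullV y h) = y := SemiVert.ext' rfl rfl

theorem pullV_iotaV {n k : ℕ} (x : SemiVert n (k - 3)) (h : ((iotaV x).1 : ℕ) ≤ k - 3) :
    pullV (iotaV x) h = x := SemiVert.ext' rfl rfl

theorem iotaV_inj {n k : ℕ} : Function.Injective (iotaV (n := n) (k := k)) := by
  intro x y hxy
  have h1 := congrArg (fun z : SemiVert n k => (z.1 : ℕ)) hxy
  have h2 := congrArg (fun z : SemiVert n k => (z.2 : ℕ)) hxy
  exact SemiVert.ext' h1 h2

theorem adj_iotaV {n k : ℕ} {x y : SemiVert n (k - 3)} :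
    (semiTree n (k - 3)).Adj x y ↔ (semiTree n k).Adj (iotaV x) (iotaV y) := by
  rw [semiTree_adj, semiTree_adj]
  constructor
  · rintro ⟨hne, hrel⟩
    exact ⟨fun hc => hne (iotaV_inj hc), hrel⟩
  · rintro ⟨hne, hrel⟩
    exact ⟨fun hc => hne (congrArg iotaV hc), hrel⟩

/-- Lift of an exponent vector to the big tree, with the `(k-1)`-level indicator added. -/
noncomputable def lamF {n k : ℕ} (w' : SemiVert n (k - 3) →₀ ℕ) : SemiVert n k →₀ ℕ :=
  Finsupp.equivFunOnFinite.symm fun y =>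
    if h : (y.1 : ℕ) ≤ k - 3 then w' (pullV y h) else if (y.1 : ℕ) = k - 1 then 1 else 0

theorem lamF_apply {n k : ℕ} (w' : SemiVert n (k - 3) →₀ ℕ) (y : SemiVert n k) :
    lamF w' y =
      if h : (y.1 : ℕ) ≤ k - 3 then w' (pullV y h) else if (y.1 : ℕ) = k - 1 then 1 else 0 := rfl

theorem lamF_iotaV {n k : ℕ} (w' : SemiVert n (k - 3) →₀ ℕ) (x : SemiVert n (k - 3)) :
    lamF w' (iotaV x) = w' x := by
  rw [lamF_apply, dif_pos (iotaV_level_le x), pullV_iotaV]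

/-- Mix: take `g` (pulled back) on low levels and `f₀` elsewhere. -/
noncomputable def mixF {n k : ℕ} (f₀ : SemiVert n k →₀ ℕ) (g : SemiVert n (k - 3) →₀ ℕ) :
    SemiVert n k →₀ ℕ :=
  Finsupp.equivFunOnFinite.symm fun y =>
    if h : (y.1 : ℕ) ≤ k - 3 then g (pullV y h) else f₀ y

theorem mixF_apply {n k : ℕ} (f₀ : SemiVert n k →₀ ℕ) (g : SemiVert n (k - 3) →₀ ℕ)
    (y : SemiVert n k) :
    mixF f₀ g y = if h : (y.1 : ℕ) ≤ k - 3 then g (pullV y h) else f₀ y := rfl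

/-- Pullback of an exponent vector along `iotaV`. -/
noncomputable def pullF {n k : ℕ} (g : SemiVert n k →₀ ℕ) : SemiVert n (k - 3) →₀ ℕ :=
  Finsupp.equivFunOnFinite.symm fun x => g (iotaV x)

theorem pullF_apply {n k : ℕ} (g : SemiVert n k →₀ ℕ) (x : SemiVert n (k - 3)) :
    pullF g x = g (iotaV x) := rfl

end Transfer

section Clause2

variable (K : Type) [Field K]

theorem lamF_good {n k : ℕ} (hk : 3 ≤ k) {w' : SemiVert n (k - 3) →₀ ℕ}
    (hg : ¬ ExpBad (semiTree n (k - 3)) w') : ¬ ExpBad (semiTree n k) (lamF w') := by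
  rintro ⟨v, w, hadj, h1, h2⟩
  have hlam : ∀ y : SemiVert n k, 1 ≤ lamF w' y → (y.1 : ℕ) ≤ k - 3 ∨ (y.1 : ℕ) = k - 1 := by
    intro y hy
    by_contra hc
    push_neg at hc
    rw [lamF_apply, dif_neg (by omega : ¬ (y.1 : ℕ) ≤ k - 3), if_neg hc.2] at hy
    omega
  have hv := hlam v h1
  have hw := hlam w h2
  have hlv := adj_levels hadj
  rcases hv with hv | hv <;> rcases hw with hw | hw
  · apply hg
    refine ⟨pullV v hv, pullV w hw, ?_, ?_, ?_⟩
    · rw [adj_iotaV, iotaV_pullV, iotaV_pullV]; exact hadj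
    · rw [lamF_apply, dif_pos hv] at h1; exact h1
    · rw [lamF_apply, dif_pos hw] at h2; exact h2
  · omega
  · omega
  · omega

theorem Zlevel {n k : ℕ} (hn : 3 ≤ n) (hk : 3 ≤ k) {r : ℕ} {u : Fin r → (SemiVert n k →₀ ℕ)}
    {Z : Fin r → Finset (SemiVert n k)}
    (h : IsStanleyDecomp K (edgeIdeal K (semiTree n k)) r u Z) (j : Fin r)
    (w₀ : SemiVert n (k - 3) →₀ ℕ) (f₀ : SemiVert n k →₀ ℕ)
    (hf₀ : (f₀.support : Set (SemiVert n k)) ⊆ (Z j : Set (SemiVert n k)))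
    (heq : lamF w₀ = u j + f₀) (z : SemiVert n k) (hz : z ∈ Z j) :
    (z.1 : ℕ) ≤ k - 3 ∨ (z.1 : ℕ) = k - 1 := by
  classical
  obtain ⟨a, rfl⟩ : ∃ a, k = a + 3 := ⟨k - 3, by omega⟩
  by_contra hne
  push_neg at hne
  obtain ⟨hne1, hne2⟩ := hne
  have hlt : (z.1 : ℕ) < a + 4 := z.1.2
  have hne1' : ¬ (z.1 : ℕ) ≤ a := by simpa using hne1
  have hne2' : (z.1 : ℕ) ≠ a + 2 := by simpa using hne2
  have hsupp : (((f₀ + Finsupp.single z 1).support : Finset _) : Set (SemiVert n (a + 3))) ⊆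
      (Z j : Set (SemiVert n (a + 3))) := by
    intro x hx
    have hx' := Finsupp.support_add (g₁ := f₀) (g₂ := Finsupp.single z 1) hx
    rcases Finset.mem_union.1 hx' with hx1 | hx2
    · exact hf₀ hx1
    · have : x = z := by simpa using Finsupp.support_single_subset hx2
      subst this; exact hz
  have hval := decomp_validity K (semiTree n (a + 3)) h j (f₀ + Finsupp.single z 1) hsupp
  have hE : u j + (f₀ + Finsupp.single z 1) = lamF w₀ + Finsupp.single z 1 := by
    rw [← add_assoc, ← heq]
  rw [hE] at hval
  set E : SemiVert n (a + 3) →₀ ℕ := lamF w₀ + Finsupp.single z 1 with hEdef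
  have hEz : 1 ≤ E z := by
    rw [hEdef, Finsupp.add_apply, Finsupp.single_apply, if_pos rfl]; omega
  have hn1 : 0 < n - 1 := by omega
  have hlamtop : ∀ y : SemiVert n (a + 3), (y.1 : ℕ) = a + 2 → 1 ≤ E y := by
    intro y hy
    rw [hEdef, Finsupp.add_apply, lamF_apply, dif_neg (by omega), if_pos (by omega)]
    omega
  have hcase : (z.1 : ℕ) = a + 1 ∨ (z.1 : ℕ) = a + 3 := by omega
  rcases hcase with hlvl | hlvl
  · -- level k-2, has a child at level k-1
    have hcast : semiLevel n (z.1 : ℕ) = n * (n - 1) ^ a := by rw [hlvl]; simp [semiLevel]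
    have hz2 : (z.2 : ℕ) < n * (n - 1) ^ a := lt_of_lt_of_eq z.2.2 hcast
    have hq : (z.2 : ℕ) * (n - 1) < semiLevel n (a + 2) := by
      show (z.2 : ℕ) * (n - 1) < n * (n - 1) ^ (a + 1)
      calc (z.2 : ℕ) * (n - 1) < (n * (n - 1) ^ a) * (n - 1) :=
            mul_lt_mul_of_pos_right hz2 hn1
        _ = n * (n - 1) ^ (a + 1) := by rw [pow_succ, mul_assoc]
    set q : SemiVert n (a + 3) := ⟨⟨a + 2, by omega⟩, ⟨(z.2 : ℕ) * (n - 1), hq⟩⟩ with hqdef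
    have hzq : z ≠ q := by
      intro hc
      have := congrArg (fun y : SemiVert n (a + 3) => (y.1 : ℕ)) hc
      simp [hqdef] at this; omega
    have hadj : (semiTree n (a + 3)).Adj z q := by
      rw [semiTree_adj]
      refine ⟨hzq, Or.inl ⟨by simp [hqdef]; omega, Or.inr ?_⟩⟩
      show (z.2 : ℕ) = (z.2 : ℕ) * (n - 1) / (n - 1)
      exact (Nat.mul_div_cancel _ hn1).symm
    exact hval ⟨z, q, hadj, hEz, hlamtop q (by simp [hqdef])⟩
  · -- level k, has its parent at level k-1
    have hcast : semiLevel n (z.1 : ℕ) = n * (n - 1) ^ (a + 2) := by rw [hlvl]; simp [semiLevel]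
    have hz2 : (z.2 : ℕ) < n * (n - 1) ^ (a + 2) := lt_of_lt_of_eq z.2.2 hcast
    have hp : (z.2 : ℕ) / (n - 1) < semiLevel n (a + 2) := by
      show (z.2 : ℕ) / (n - 1) < n * (n - 1) ^ (a + 1)
      rw [Nat.div_lt_iff_lt_mul hn1]
      calc (z.2 : ℕ) < n * (n - 1) ^ (a + 2) := hz2
        _ = n * (n - 1) ^ (a + 1) * (n - 1) := by rw [pow_succ, mul_assoc]
    set p : SemiVert n (a + 3) := ⟨⟨a + 2, by omega⟩, ⟨(z.2 : ℕ) / (n - 1), hp⟩⟩ with hpdef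
    have hpz : p ≠ z := by
      intro hc
      have := congrArg (fun y : SemiVert n (a + 3) => (y.1 : ℕ)) hc
      simp [hpdef] at this; omega
    have hadj : (semiTree n (a + 3)).Adj p z := by
      rw [semiTree_adj]
      exact ⟨hpz, Or.inl ⟨by simp [hpdef]; omega, Or.inr rfl⟩⟩
    exact hval ⟨p, z, hadj, hlamtop p (by simp [hpdef]), hEz⟩

end Clause2

section Clause2Main

variable (K : Type) [Field K]

theorem semiLevel_pred {n k : ℕ} (hk : 3 ≤ k) : semiLevel n (k - 1) = n * (n - 1) ^ (k - 2) := by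
  obtain ⟨a, rfl⟩ : ∃ a, k = a + 3 := ⟨k - 3, by omega⟩
  rfl

theorem clause2_aux (n k : ℕ) (hn : 3 ≤ n) (hk : 3 ≤ k) (d : ℕ)
    (hd : d ∈ sdepthSet K (semiTree n k)) :
    d - n * (n - 1) ^ (k - 2) ∈ sdepthSet K (semiTree n (k - 3)) := by
  classical
  obtain ⟨r, u, Z, h, hle⟩ := hd
  set G := semiTree n k with hG
  set G' := semiTree n (k - 3) with hG'
  set c := n * (n - 1) ^ (k - 2) with hc
  set P : Fin r → Prop := fun j => ∃ (w' : SemiVert n (k - 3) →₀ ℕ) (f : SemiVert n k →₀ ℕ),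
    ¬ ExpBad G' w' ∧ ((f.support : Set (SemiVert n k)) ⊆ (Z j : Set (SemiVert n k))) ∧
      lamF w' = u j + f with hP
  set J : Finset (Fin r) := Finset.univ.filter P with hJ
  set σ : Fin J.card ≃ {j // j ∈ J} := J.equivFin.symm with hσ
  set u' : Fin J.card → (SemiVert n (k - 3) →₀ ℕ) := fun i => pullF (u (σ i).1) with hu'
  set Z' : Fin J.card → Finset (SemiVert n (k - 3)) :=
    fun i => Finset.univ.filter (fun x => iotaV x ∈ Z (σ i).1) with hZ'
  -- validity
  have hval : ∀ j : Fin r, P j → ∀ f' : SemiVert n (k - 3) →₀ ℕ,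
      ((f'.support : Set (SemiVert n (k - 3))) ⊆
        ((Finset.univ.filter fun x => iotaV x ∈ Z j : Finset (SemiVert n (k - 3))) :
          Set (SemiVert n (k - 3)))) →
      ¬ ExpBad G' (pullF (u j) + f') := by
    rintro j ⟨w₀, f₀, hg₀, hf₀, heq₀⟩ f' hf' ⟨x, y, hadj, h1, h2⟩
    set F : SemiVert n k →₀ ℕ := f₀ + mixF 0 f' with hF
    have hFsupp : ((F.support : Finset (SemiVert n k)) : Set (SemiVert n k)) ⊆
        (Z j : Set (SemiVert n k)) := by
      intro t ht
      rcases Finset.mem_union.1 (Finsupp.support_add ht) with ht1 | ht2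
      · exact hf₀ ht1
      · have htne : mixF 0 f' t ≠ 0 := Finsupp.mem_support_iff.1 ht2
        rw [mixF_apply] at htne
        by_cases hlt : (t.1 : ℕ) ≤ k - 3
        · rw [dif_pos hlt] at htne
          have hmem : pullV t hlt ∈ f'.support := Finsupp.mem_support_iff.2 htne
          have h3 := hf' hmem
          have h4 : iotaV (pullV t hlt) ∈ Z j := by
            simpa using h3
          rwa [iotaV_pullV] at h4
        · rw [dif_neg hlt] at htne; simp at htne
    have hgood := decomp_validity K G h j F hFsupp
    apply hgood
    rw [Finsupp.add_apply, pullF_apply] at h1 h2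
    refine ⟨iotaV x, iotaV y, adj_iotaV.1 hadj, ?_, ?_⟩
    · have hexp : (u j + F) (iotaV x) = u j (iotaV x) + (f₀ (iotaV x) + f' x) := by
        rw [Finsupp.add_apply, hF, Finsupp.add_apply, mixF_apply,
          dif_pos (iotaV_level_le x), pullV_iotaV]
      rw [hexp]; omega
    · have hexp : (u j + F) (iotaV y) = u j (iotaV y) + (f₀ (iotaV y) + f' y) := by
        rw [Finsupp.add_apply, hF, Finsupp.add_apply, mixF_apply,
          dif_pos (iotaV_level_le y), pullV_iotaV]
      rw [hexp]; omega
  -- cover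
  have hcov : ∀ w' : SemiVert n (k - 3) →₀ ℕ, ¬ ExpBad G' w' →
      ∃ (j : Fin r) (_ : j ∈ J) (f' : SemiVert n (k - 3) →₀ ℕ),
        ((f'.support : Set (SemiVert n (k - 3))) ⊆
          ((Finset.univ.filter fun x => iotaV x ∈ Z j : Finset (SemiVert n (k - 3))) :
            Set (SemiVert n (k - 3)))) ∧
        w' = pullF (u j) + f' := by
    intro w' hg
    obtain ⟨j, f, hf, heq⟩ := decomp_cover K G h (lamF w') (lamF_good hk hg)
    have hPj : P j := ⟨w', f, hg, hf, heq⟩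
    refine ⟨j, by simp [hJ, hPj], pullF f, ?_, ?_⟩
    · intro x hx
      have hxne : f (iotaV x) ≠ 0 := by
        have := Finsupp.mem_support_iff.1 (Finset.mem_coe.1 hx)
        rwa [pullF_apply] at this
      have : iotaV x ∈ Z j := hf (Finsupp.mem_support_iff.2 hxne)
      simp [this]
    · ext x
      have h5 : lamF w' (iotaV x) = (u j + f) (iotaV x) := by rw [heq]
      rw [lamF_iotaV, Finsupp.add_apply] at h5
      rw [h5, Finsupp.add_apply, pullF_apply, pullF_apply]
  -- disjointness
  have build : ∀ (jj : Fin r) (w'' : SemiVert n (k - 3) →₀ ℕ), P jj →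
      ∀ ff : SemiVert n (k - 3) →₀ ℕ,
      ((ff.support : Set (SemiVert n (k - 3))) ⊆
        ((Finset.univ.filter fun x => iotaV x ∈ Z jj : Finset (SemiVert n (k - 3))) :
          Set (SemiVert n (k - 3)))) →
      w'' = pullF (u jj) + ff →
      ∃ FF : SemiVert n k →₀ ℕ,
        ((FF.support : Set (SemiVert n k)) ⊆ (Z jj : Set (SemiVert n k))) ∧
        lamF w'' = u jj + FF := by
    rintro jj w'' ⟨w₀, f₀, hg₀, hf₀, heq₀⟩ ff hffs heqff
    refine ⟨mixF f₀ ff, ?_, ?_⟩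
    · intro t ht
      have htne : mixF f₀ ff t ≠ 0 := Finsupp.mem_support_iff.1 (Finset.mem_coe.1 ht)
      rw [mixF_apply] at htne
      by_cases hlt : (t.1 : ℕ) ≤ k - 3
      · rw [dif_pos hlt] at htne
        have hmem : pullV t hlt ∈ ff.support := Finsupp.mem_support_iff.2 htne
        have h3 := hffs hmem
        have h4 : iotaV (pullV t hlt) ∈ Z jj := by simpa using h3
        rwa [iotaV_pullV] at h4
      · rw [dif_neg hlt] at htne
        exact hf₀ (Finsupp.mem_support_iff.2 htne)
    · ext t
      rw [Finsupp.add_apply, lamF_apply, mixF_apply]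
      by_cases hlt : (t.1 : ℕ) ≤ k - 3
      · rw [dif_pos hlt, dif_pos hlt]
        have h5 : w'' (pullV t hlt) = (pullF (u jj) + ff) (pullV t hlt) := by rw [heqff]
        rw [Finsupp.add_apply, pullF_apply, iotaV_pullV] at h5
        exact h5
      · rw [dif_neg hlt, dif_neg hlt]
        have h6 : lamF w₀ t = (u jj + f₀) t := by rw [heq₀]
        rw [lamF_apply, dif_neg hlt, Finsupp.add_apply] at h6
        exact h6
  have hdis : ∀ j1 j2 : Fin r, P j1 → P j2 →
      ∀ f1 f2 : SemiVert n (k - 3) →₀ ℕ,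
      ((f1.support : Set (SemiVert n (k - 3))) ⊆
        ((Finset.univ.filter fun x => iotaV x ∈ Z j1 : Finset (SemiVert n (k - 3))) :
          Set (SemiVert n (k - 3)))) →
      ((f2.support : Set (SemiVert n (k - 3))) ⊆
        ((Finset.univ.filter fun x => iotaV x ∈ Z j2 : Finset (SemiVert n (k - 3))) :
          Set (SemiVert n (k - 3)))) →
      pullF (u j1) + f1 = pullF (u j2) + f2 → j1 = j2 := by
    intro j1 j2 hP1 hP2 f1 f2 hs1 hs2 heq12
    obtain ⟨F1, hF1s, hF1⟩ := build j1 (pullF (u j1) + f1) hP1 f1 hs1 rfl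
    obtain ⟨F2, hF2s, hF2⟩ := build j2 (pullF (u j1) + f1) hP2 f2 hs2 heq12
    exact decomp_disjoint K G h j1 j2 F1 F2 hF1s hF2s (by rw [← hF1, ← hF2])
  -- cardinality
  have hcard : ∀ j : Fin r, P j →
      (Z j).card ≤ (Finset.univ.filter fun x => iotaV x ∈ Z j).card + c := by
    rintro j ⟨w₀, f₀, hg₀, hf₀, heq₀⟩
    have hlev : ∀ z ∈ Z j, (z.1 : ℕ) ≤ k - 3 ∨ (z.1 : ℕ) = k - 1 :=
      fun z hz => Zlevel K hn hk h j w₀ f₀ hf₀ heq₀ z hz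
    have hsplit := Finset.card_filter_add_card_filter_not
      (s := Z j) (p := fun z => (z.1 : ℕ) ≤ k - 3)
    have hlow : ((Z j).filter fun z => (z.1 : ℕ) ≤ k - 3).card =
        (Finset.univ.filter fun x => iotaV x ∈ Z j).card := by
      apply Finset.card_bij (fun z hz => pullV z (Finset.mem_filter.1 hz).2)
      · intro z hz
        have h1 := (Finset.mem_filter.1 hz).1
        have h2 := (Finset.mem_filter.1 hz).2
        refine Finset.mem_filter.2 ⟨Finset.mem_univ _, ?_⟩
        rwa [iotaV_pullV]
      · intro z1 hz1 z2 hz2 h12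
        have := congrArg iotaV h12
        rwa [iotaV_pullV, iotaV_pullV] at this
      · intro x hx
        have h1 : iotaV x ∈ Z j := (Finset.mem_filter.1 hx).2
        refine ⟨iotaV x, Finset.mem_filter.2 ⟨h1, iotaV_level_le x⟩, ?_⟩
        rw [pullV_iotaV]
    have hhigh : ((Z j).filter fun z => ¬ (z.1 : ℕ) ≤ k - 3).card ≤ c := by
      have hsub : (Z j).filter (fun z => ¬ (z.1 : ℕ) ≤ k - 3) ⊆
          Finset.univ.filter fun z : SemiVert n k => (z.1 : ℕ) = k - 1 := by
        intro z hz
        obtain ⟨hz1, hz2⟩ := Finset.mem_filter.1 hz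
        rcases hlev z hz1 with hlo | hhi
        · exact absurd hlo hz2
        · exact Finset.mem_filter.2 ⟨Finset.mem_univ _, hhi⟩
      calc ((Z j).filter fun z => ¬ (z.1 : ℕ) ≤ k - 3).card
          ≤ (Finset.univ.filter fun z : SemiVert n k => (z.1 : ℕ) = k - 1).card :=
            Finset.card_le_card hsub
        _ = semiLevel n (k - 1) := card_level n k (k - 1) (by omega)
        _ = c := semiLevel_pred hk
    omega
  -- assemble
  refine ⟨J.card, u', Z', ?_, ?_⟩
  · apply construct_decomp
    · intro i f' hf'
      exact hval (σ i).1 (Finset.mem_filter.1 (σ i).2).2 f' hf'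
    · intro e' he'
      obtain ⟨j, hj, f', hs, heqf⟩ := hcov e' he'
      refine ⟨σ.symm ⟨j, hj⟩, f', ?_, ?_⟩
      · show (f'.support : Set (SemiVert n (k - 3))) ⊆ (Z' (σ.symm ⟨j, hj⟩) : Set _)
        rw [hZ']
        simp only [Equiv.apply_symm_apply]
        exact hs
      · show e' = u' (σ.symm ⟨j, hj⟩) + f'
        rw [hu']
        simp only [Equiv.apply_symm_apply]
        exact heqf
    · intro i1 i2 f1 f2 hs1 hs2 heq12
      have hP1 : P (σ i1).1 := (Finset.mem_filter.1 (σ i1).2).2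
      have hP2 : P (σ i2).1 := (Finset.mem_filter.1 (σ i2).2).2
      have hj := hdis (σ i1).1 (σ i2).1 hP1 hP2 f1 f2 hs1 hs2 heq12
      exact σ.injective (Subtype.ext hj)
  · intro i
    have hPi : P (σ i).1 := (Finset.mem_filter.1 (σ i).2).2
    have h1 := hle (σ i).1
    have h2 := hcard (σ i).1 hPi
    have h3 : (Z' i).card = (Finset.univ.filter fun x => iotaV x ∈ Z (σ i).1).card := rfl
    omega

end Clause2Main

theorem sdepth_semiTree_recursive (K : Type) [Field K] (n : ℕ) (hn : 3 ≤ n) :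
    quotSdepth K (SemiVert n 2) (edgeIdeal K (semiTree n 2)) ≤ n ∧
    (∀ k : ℕ, 3 ≤ k →
      quotSdepth K (SemiVert n k) (edgeIdeal K (semiTree n k)) ≤
        n * (n - 1) ^ (k - 2) +
          quotSdepth K (SemiVert n (k - 3)) (edgeIdeal K (semiTree n (k - 3)))) ∧
    quotSdepth K (SemiVert n 0) (edgeIdeal K (semiTree n 0)) = 1 := by
  refine ⟨clause1 K n hn, ?_, clause3 K n⟩
  intro k hk
  rw [quotSdepth_eq]
  apply quotSdepth_le_of_forall
  intro d hd
  have hmem := clause2_aux K n k hn hk d hd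
  have h1 : d - n * (n - 1) ^ (k - 2) ≤
      quotSdepth K (SemiVert n (k - 3)) (edgeIdeal K (semiTree n (k - 3))) := by
    rw [quotSdepth_eq]
    exact le_csSup (sdepthSet_bddAbove K _) hmem
  omega
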